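/- arXiv:2007.03210 — 3 statements merged into one kernel-verified Lean document; each statement's English description precedes it below -/
import Mathlib

section
/- Let L̄ : 2^[d] → ℝ≥0 be C-approximately supermodular (for all S ⊆ T and i, C·(L̄(S) − L̄(S ∪ {i})) ≥ L̄(T) − L̄(T ∪ {i})), monotone decreasing, with L̄([d]) = 0. For S ⊆ [d] let R(S) = {i : L̄(S ∪ {i}) < L̄(S)} and R^η(S) = {i : L̄(S) − L̄(S ∪ {i}) > η}. If R^η(S) = ∅ then L̄(S) ≤ C·η·|R(S)|. -/
/-- If `L̄` is `C`-approximately supermodular, monotone decreasing,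
nonnegative, with `L̄([d]) = 0`, and no coordinate has marginal decrease larger than
`η` at `S` (i.e. `R^η(S) = ∅`), then `L̄(S) ≤ C·η·|R(S)|`, where
`R(S) = {i : L̄(S ∪ {i}) < L̄(S)}`. -/
theorem small_loss_when_no_large_marginal
    (d : ℕ) (L : Finset (Fin d) → ℝ) (C η : ℝ) (hC : 1 ≤ C) (hη : 0 < η)
    (hnonneg : ∀ S, 0 ≤ L S)
    (hanti : ∀ S T : Finset (Fin d), S ⊆ T → L T ≤ L S)
    (hsup : ∀ S T : Finset (Fin d), S ⊆ T → ∀ i : Fin d,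
      L T - L (insert i T) ≤ C * (L S - L (insert i S)))
    (hfull : L Finset.univ = 0)
    (S : Finset (Fin d))
    (hRη : ∀ i : Fin d, L S - L (insert i S) ≤ η) :
    L S ≤ C * η * ({i : Fin d | L (insert i S) < L S}.ncard : ℝ) := by
  classical
  have hC0 : (0:ℝ) ≤ C := le_trans zero_le_one hC
  set R : Finset (Fin d) := Finset.univ.filter (fun i => L (insert i S) < L S) with hR
  -- adding a non-R coordinate to a superset of S cannot decrease L
  have hA : ∀ (T : Finset (Fin d)) (i : Fin d), S ⊆ T → i ∉ R → L T ≤ L (insert i T) := by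
    intro T i hST hiR
    have h1 : L S ≤ L (insert i S) := by
      by_contra h
      exact hiR (by simp [hR, lt_of_not_ge h])
    have h2 := hsup S T hST i
    nlinarith
  -- anything containing S ∪ R has zero loss
  have hB : ∀ n (T : Finset (Fin d)), S ∪ R ⊆ T → (Finset.univ \ T).card = n → L T ≤ 0 := by
    intro n
    induction n with
    | zero =>
      intro T hT hcard
      have hTuniv : T = Finset.univ := by
        have h := Finset.sdiff_eq_empty_iff_subset.mp (Finset.card_eq_zero.mp hcard)
        exact Finset.eq_univ_iff_forall.mpr fun i => h (Finset.mem_univ i)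
      rw [hTuniv, hfull]
    | succ n ih =>
      intro T hT hcard
      obtain ⟨i, hi⟩ : (Finset.univ \ T).Nonempty := by
        rw [← Finset.card_pos, hcard]; omega
      have hiT : i ∉ T := (Finset.mem_sdiff.mp hi).2
      have hiR : i ∉ R := fun h => hiT (hT (Finset.mem_union_right _ h))
      have hST : S ⊆ T := fun x hx => hT (Finset.mem_union_left _ hx)
      have h1 := hA T i hST hiR
      have h2 : L (insert i T) ≤ 0 := by
        apply ih (insert i T) (hT.trans (Finset.subset_insert i T))
        rw [Finset.sdiff_insert, Finset.card_erase_of_mem hi, hcard]; omega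
      linarith
  -- telescoping bound
  have hTel : ∀ A : Finset (Fin d), L S - L (S ∪ A) ≤ C * η * A.card := by
    intro A
    induction A using Finset.induction_on with
    | empty => simp
    | insert i A hiA ih =>
      have hunion : S ∪ insert i A = insert i (S ∪ A) := by
        ext x; simp [or_left_comm, or_comm]
      have key : L (S ∪ A) - L (insert i (S ∪ A)) ≤ C * η := by
        calc L (S ∪ A) - L (insert i (S ∪ A)) ≤ C * (L S - L (insert i S)) :=
              hsup S (S ∪ A) Finset.subset_union_left i
          _ ≤ C * η := mul_le_mul_of_nonneg_left (hRη i) hC0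
      rw [hunion, Finset.card_insert_of_notMem hiA]
      push_cast
      nlinarith
  have hRzero : L (S ∪ R) = 0 :=
    le_antisymm (hB _ (S ∪ R) (le_refl _) rfl) (hnonneg _)
  have hmain : L S ≤ C * η * R.card := by
    have := hTel R
    linarith [hRzero ▸ this]
  have hcardeq : ({i : Fin d | L (insert i S) < L S}.ncard : ℝ) = R.card := by
    have : {i : Fin d | L (insert i S) < L S} = ↑R := by
      ext x; simp [hR]
    rw [this, Set.ncard_coe_finset]
  rw [hcardeq]
  exact hmain
end

section
/- Let m(x) = a·(x₁ ⊕ x₂) for a ≠ 0, where ⊕ is XOR, with x uniform on {0,1}^d. Define V̄(S) = E[(E[m(w) | w_S = x_S])²]. Then for every S ⊆ [d] with {1,2} ⊄ S and |S ∩ {1,2}| ≤ 1, and every j ∈ [d], V̄(S ∪ {j}) = V̄(S) whenever j ∉ {1,2} or S ∩ {1,2} = ∅. In particular, for all S ⊆ [d]∖{1,2} and all j ∈ [d], V̄(S ∪ {j}) − V̄(S) = 0, so no single-coordinate split changes the variance function. -/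
open Finset

/-- Conditional mean `E[m(w) | w_S = x_S]` for weight function `p` on `{0,1}^d`
(with the convention `·/0 = 0`). -/
noncomputable def condMean {d : ℕ} (p m : (Fin d → Bool) → ℝ) (S : Finset (Fin d))
    (x : Fin d → Bool) : ℝ :=
  (∑ w : Fin d → Bool, if ∀ j ∈ S, w j = x j then p w * m w else 0) /
  (∑ w : Fin d → Bool, if ∀ j ∈ S, w j = x j then p w else 0)

/-- `V̄(S) = E_x[(E_w[m(w) | w_S = x_S])²]`. -/
noncomputable def Vbar {d : ℕ} (p m : (Fin d → Bool) → ℝ) (S : Finset (Fin d)) : ℝ :=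
  ∑ x : Fin d → Bool, p x * (condMean p m S x) ^ 2

/-- The uniform distribution on `{0,1}^d`. -/
noncomputable def unif (d : ℕ) : (Fin d → Bool) → ℝ := fun _ => 1 / 2 ^ d

lemma condMean_const {d : ℕ} (a : ℝ) (i₁ i₂ : Fin d) (hi : i₁ ≠ i₂)
    (m : (Fin d → Bool) → ℝ)
    (hm : ∀ x, m x = a * (if xor (x i₁) (x i₂) then 1 else 0))
    (S : Finset (Fin d)) (hS : i₁ ∉ S ∨ i₂ ∉ S) (x : Fin d → Bool) :
    condMean (unif d) m S x = a / 2 := by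
  classical
  obtain ⟨k, hk, hkx⟩ : ∃ k, k ∉ S ∧ (k = i₁ ∨ k = i₂) := by
    rcases hS with h | h
    exacts [⟨i₁, h, Or.inl rfl⟩, ⟨i₂, h, Or.inr rfl⟩]
  set T : ℝ := ∑ w : Fin d → Bool,
      (if ∀ j ∈ S, w j = x j then (if xor (w i₁) (w i₂) then (1:ℝ) else 0) else 0) with hT
  set F : ℝ := ∑ w : Fin d → Bool,
      (if ∀ j ∈ S, w j = x j then (if xor (w i₁) (w i₂) then (0:ℝ) else 1) else 0) with hF
  set B : ℝ := ∑ w : Fin d → Bool, (if ∀ j ∈ S, w j = x j then (1:ℝ) else 0) with hB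
  have flip_invol : ∀ w : Fin d → Bool,
      Function.update (Function.update w k (!w k)) k (!(Function.update w k (!w k) k)) = w := by
    intro w
    simp [Function.update_idem, Function.update_self]
  let e : (Fin d → Bool) ≃ (Fin d → Bool) :=
    ⟨fun w => Function.update w k (!w k), fun w => Function.update w k (!w k),
     fun w => flip_invol w, fun w => flip_invol w⟩
  have he : ∀ (w : Fin d → Bool) (j : Fin d), j ∈ S → e w j = w j := by
    intro w j hj
    have : j ≠ k := by rintro rfl; exact hk hj
    simp [e, Function.update_apply, this]
  have hPe : ∀ w : Fin d → Bool, (∀ j ∈ S, e w j = x j) ↔ (∀ j ∈ S, w j = x j) := by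
    intro w
    constructor
    · intro h j hj; rw [← he w j hj]; exact h j hj
    · intro h j hj; rw [he w j hj]; exact h j hj
  have hxor : ∀ w : Fin d → Bool, xor (e w i₁) (e w i₂) = !(xor (w i₁) (w i₂)) := by
    intro w
    rcases hkx with rfl | rfl
    · simp [e, Function.update_apply, hi, hi.symm]
    · simp [e, Function.update_apply, hi, hi.symm]
  have hTF : T = F := by
    rw [hT, hF]
    refine Fintype.sum_equiv e _ _ ?_
    intro w
    by_cases hw : ∀ j ∈ S, w j = x j
    · rw [if_pos hw, if_pos ((hPe w).2 hw), hxor w]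
      cases hxw : xor (w i₁) (w i₂) <;> simp [hxw]
    · rw [if_neg hw, if_neg (fun h => hw ((hPe w).1 h))]
  have hB2 : B = 2 * T := by
    have hBTF : B = T + F := by
      rw [hT, hF, hB, ← Finset.sum_add_distrib]
      refine Finset.sum_congr rfl fun w _ => ?_
      by_cases hw : ∀ j ∈ S, w j = x j
      · simp only [if_pos hw]
        cases hxw : xor (w i₁) (w i₂) <;> simp [hxw]
      · simp [hw]
    rw [hBTF, ← hTF]; ring
  have hBpos : 0 < B := by
    rw [hB]
    refine Finset.sum_pos' (fun w _ => by positivity) ⟨x, Finset.mem_univ x, ?_⟩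
    rw [if_pos (fun j _ => rfl)]; norm_num
  have hnum : (∑ w : Fin d → Bool, if ∀ j ∈ S, w j = x j then unif d w * m w else 0)
      = (1 / 2 ^ d * a) * T := by
    rw [hT, Finset.mul_sum]
    refine Finset.sum_congr rfl fun w _ => ?_
    by_cases hw : ∀ j ∈ S, w j = x j
    · simp only [if_pos hw, hm w, unif]; ring
    · simp [hw]
  have hden : (∑ w : Fin d → Bool, if ∀ j ∈ S, w j = x j then unif d w else 0)
      = (1 / 2 ^ d) * B := by
    rw [hB, Finset.mul_sum]
    refine Finset.sum_congr rfl fun w _ => ?_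
    by_cases hw : ∀ j ∈ S, w j = x j <;> simp [hw, unif]
  have hTpos : 0 < T := by linarith
  unfold condMean
  rw [hnum, hden, hB2]
  have h2 : (2:ℝ)^d ≠ 0 := by positivity
  have hT0 : T ≠ 0 := ne_of_gt hTpos
  field_simp

/-- For `m(x) = a·(x_{i₁} ⊕ x_{i₂})` under the uniform distribution:
for every `S` not containing both relevant coordinates and with at most one of them,
and every `j` with `j ∉ {i₁,i₂}` or `S ∩ {i₁,i₂} = ∅`, `V̄(S ∪ {j}) = V̄(S)`; in
particular, for `S ⊆ [d]∖{i₁,i₂}` every single-coordinate split has zero gain. -/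
theorem xor_no_marginal_gain
    (d : ℕ) (a : ℝ) (ha : a ≠ 0) (i₁ i₂ : Fin d) (hi : i₁ ≠ i₂)
    (m : (Fin d → Bool) → ℝ)
    (hm : ∀ x, m x = a * (if xor (x i₁) (x i₂) then 1 else 0)) :
    (∀ S : Finset (Fin d), ¬({i₁, i₂} ⊆ S) → (S ∩ {i₁, i₂}).card ≤ 1 →
      ∀ j : Fin d, (j ∉ ({i₁, i₂} : Finset (Fin d)) ∨ S ∩ {i₁, i₂} = ∅) →
        Vbar (unif d) m (insert j S) = Vbar (unif d) m S) ∧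
    (∀ S : Finset (Fin d), S ∩ {i₁, i₂} = ∅ → ∀ j : Fin d,
        Vbar (unif d) m (insert j S) - Vbar (unif d) m S = 0) := by

  have hVeq : ∀ S₁ S₂ : Finset (Fin d), (i₁ ∉ S₁ ∨ i₂ ∉ S₁) → (i₁ ∉ S₂ ∨ i₂ ∉ S₂) →
      Vbar (unif d) m S₁ = Vbar (unif d) m S₂ := by
    intro S₁ S₂ h1 h2
    unfold Vbar
    refine Finset.sum_congr rfl fun x _ => ?_
    rw [condMean_const a i₁ i₂ hi m hm S₁ h1 x, condMean_const a i₁ i₂ hi m hm S₂ h2 x]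
  have part1 : ∀ S : Finset (Fin d), ¬({i₁, i₂} ⊆ S) → (S ∩ {i₁, i₂}).card ≤ 1 →
      ∀ j : Fin d, (j ∉ ({i₁, i₂} : Finset (Fin d)) ∨ S ∩ {i₁, i₂} = ∅) →
        Vbar (unif d) m (insert j S) = Vbar (unif d) m S := by
    intro S hS1 _ j hj
    have hSne : i₁ ∉ S ∨ i₂ ∉ S := by
      by_contra h
      push_neg at h
      exact hS1 (Finset.insert_subset h.1 (Finset.singleton_subset_iff.mpr h.2))
    have hIns : i₁ ∉ insert j S ∨ i₂ ∉ insert j S := by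
      rcases hj with hj | hj
      · simp only [Finset.mem_insert, Finset.mem_singleton, not_or] at hj
        rcases hSne with h | h
        · left; simp [Finset.mem_insert, h, Ne.symm hj.1]
        · right; simp [Finset.mem_insert, h, Ne.symm hj.2]
      · have h1 : i₁ ∉ S := fun h => by
          have : i₁ ∈ S ∩ ({i₁, i₂} : Finset (Fin d)) :=
            Finset.mem_inter.mpr ⟨h, by simp⟩
          rw [hj] at this; exact absurd this (Finset.notMem_empty _)
        have h2 : i₂ ∉ S := fun h => by
          have : i₂ ∈ S ∩ ({i₁, i₂} : Finset (Fin d)) :=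
            Finset.mem_inter.mpr ⟨h, by simp⟩
          rw [hj] at this; exact absurd this (Finset.notMem_empty _)
        rcases eq_or_ne j i₁ with rfl | hji
        · right; simp [Finset.mem_insert, h2, Ne.symm hi]
        · left; simp [Finset.mem_insert, h1, Ne.symm hji]
    exact hVeq _ _ hIns hSne
  refine ⟨part1, fun S hS j => ?_⟩
  have h1 : i₁ ∉ S := fun h => by
    have : i₁ ∈ S ∩ ({i₁, i₂} : Finset (Fin d)) := Finset.mem_inter.mpr ⟨h, by simp⟩
    rw [hS] at this; exact absurd this (Finset.notMem_empty _)
  have hsub : ¬({i₁, i₂} : Finset (Fin d)) ⊆ S := fun h => h1 (h (by simp))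
  have hcard : (S ∩ ({i₁, i₂} : Finset (Fin d))).card ≤ 1 := by rw [hS]; simp
  rw [part1 S hsub hcard j (Or.inr hS), sub_self]
end

section
/- Let m(x) = a·x₁ + a·x₂ − b·x₁x₂ with x uniform on {0,1}^d and define V̄(S) = E[(E[m(w) | w_S = x_S])²]. Then V̄(∅) = (a − b/4)², V̄({1}) = V̄({2}) = (5/4)a² − (3/4)ab + (1/8)b², and V̄({1,2}) = (3/2)a² − ab + (1/4)b². Consequently, whenever b ≠ 2a, the ratio (V̄({1,2}) − V̄({2})) / (V̄({1}) − V̄(∅)) equals 2·(2a² − 2ab + b²)/(b − 2a)², which is finite. -/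
open Finset

set_option maxHeartbeats 1600000

/-- The indicator `{0,1}`-value of a boolean coordinate. -/
def b2r (b : Bool) : ℝ := if b then 1 else 0

lemma sum_one {α : Type*} [Fintype α] [DecidableEq α] (k : α) (f : Bool → ℝ) :
    ∑ g : α → Bool, f (g k) = 2 ^ (Fintype.card α - 1) * (f false + f true) := by
  have h1 : ∑ g : α → Bool, f (g k) = ∑ p : Bool × ({j : α // j ≠ k} → Bool), f p.1 :=
    Fintype.sum_equiv (Equiv.piSplitAt k fun _ => Bool) _ _ (fun g => by simp)
  rw [h1, Fintype.sum_prod_type]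
  simp only [Finset.sum_const, Finset.card_univ, nsmul_eq_mul, Fintype.card_fun,
    Fintype.card_bool, Fintype.card_subtype_compl, Fintype.card_subtype_eq]
  rw [Fintype.sum_bool]
  push_cast
  ring

lemma sum_two {d : ℕ} (i₁ i₂ : Fin d) (hi : i₁ ≠ i₂) (f : Bool → Bool → ℝ) :
    ∑ w : Fin d → Bool, f (w i₁) (w i₂)
      = 2 ^ (d - 2) * (f false false + f false true + f true false + f true true) := by
  have h1 : ∑ w : Fin d → Bool, f (w i₁) (w i₂)
      = ∑ p : Bool × ({j : Fin d // j ≠ i₁} → Bool), f p.1 (p.2 ⟨i₂, hi.symm⟩) :=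
    Fintype.sum_equiv (Equiv.piSplitAt i₁ fun _ => Bool) _ _ (fun w => by simp)
  rw [h1, Fintype.sum_prod_type]
  have h2 : ∀ b1 : Bool, ∑ g : ({j : Fin d // j ≠ i₁} → Bool), f b1 (g ⟨i₂, hi.symm⟩)
      = 2 ^ (d - 2) * (f b1 false + f b1 true) := by
    intro b1
    rw [sum_one (⟨i₂, hi.symm⟩ : {j : Fin d // j ≠ i₁}) (f b1)]
    congr 2
    simp [Fintype.card_subtype_compl, Fintype.card_subtype_eq]
    omega
  simp only [h2]
  rw [Fintype.sum_bool]
  ring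

lemma sum_two' {d : ℕ} (i₁ i₂ : Fin d) (hi : i₁ ≠ i₂) (g : (Fin d → Bool) → ℝ)
    (f : Bool → Bool → ℝ) (hg : ∀ w, g w = f (w i₁) (w i₂)) :
    ∑ w : Fin d → Bool, g w
      = 2 ^ (d - 2) * (f false false + f false true + f true false + f true true) :=
  (Finset.sum_congr rfl fun w _ => hg w).trans (sum_two i₁ i₂ hi f)

/-- For `m(x) = a·x₁ + a·x₂ − b·x₁x₂` under the uniform distribution on
`{0,1}^d`: `V̄(∅) = (a − b/4)²`, `V̄({1}) = V̄({2}) = (5/4)a² − (3/4)ab + (1/8)b²`,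
`V̄({1,2}) = (3/2)a² − ab + (1/4)b²`; and if `b ≠ 2a` then
`(V̄({1,2}) − V̄({2}))/(V̄({1}) − V̄(∅)) = 2(2a² − 2ab + b²)/(b − 2a)²`. -/
theorem quadratic_variance_values
    (d : ℕ) (a b : ℝ) (i₁ i₂ : Fin d) (hi : i₁ ≠ i₂)
    (m : (Fin d → Bool) → ℝ)
    (hm : ∀ x, m x = a * b2r (x i₁) + a * b2r (x i₂) - b * (b2r (x i₁) * b2r (x i₂))) :
    Vbar (unif d) m ∅ = (a - b / 4) ^ 2 ∧
    Vbar (unif d) m {i₁} = 5 / 4 * a ^ 2 - 3 / 4 * a * b + 1 / 8 * b ^ 2 ∧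
    Vbar (unif d) m {i₂} = 5 / 4 * a ^ 2 - 3 / 4 * a * b + 1 / 8 * b ^ 2 ∧
    Vbar (unif d) m {i₁, i₂} = 3 / 2 * a ^ 2 - a * b + 1 / 4 * b ^ 2 ∧
    (b ≠ 2 * a →
      (Vbar (unif d) m {i₁, i₂} - Vbar (unif d) m {i₂}) /
          (Vbar (unif d) m {i₁} - Vbar (unif d) m ∅)
        = 2 * (2 * a ^ 2 - 2 * a * b + b ^ 2) / (b - 2 * a) ^ 2) := by
  have hd : 2 ≤ d := by
    have h1 : Nontrivial (Fin d) := ⟨⟨i₁, i₂, hi⟩⟩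
    have h2 := Fintype.one_lt_card (α := Fin d)
    simp only [Fintype.card_fin] at h2
    omega
  have hcne : ((2:ℝ)) ^ (d - 2) ≠ 0 := by positivity
  have hpow : ((2:ℝ)) ^ d = 2 ^ (d - 2) * 4 := by
    have : d - 2 + 2 = d := by omega
    rw [← this, pow_add]; norm_num
  -- V(∅)
  have hcm0 : ∀ x : Fin d → Bool, condMean (unif d) m ∅ x = a - b / 4 := by
    intro x
    unfold condMean unif
    simp only [Finset.notMem_empty, false_implies, implies_true, if_true, hm]
    rw [sum_two' i₁ i₂ hi _
        (fun b1 b2 => 1/(2:ℝ)^d * (a * b2r b1 + a * b2r b2 - b * (b2r b1 * b2r b2)))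
        (fun w => rfl),
      sum_two' i₁ i₂ hi _ (fun _ _ => 1/(2:ℝ)^d) (fun w => rfl)]
    simp only [b2r, if_true, if_false, Bool.cond_true, Bool.false_eq_true]
    rw [hpow]
    field_simp
    ring
  have hV0 : Vbar (unif d) m ∅ = (a - b / 4) ^ 2 := by
    unfold Vbar
    simp only [hcm0]
    rw [sum_two' i₁ i₂ hi (fun x => unif d x * (a - b / 4) ^ 2)
        (fun _ _ => 1/(2:ℝ)^d * (a - b / 4) ^ 2) (fun w => rfl)]
    rw [hpow]
    field_simp
    ring
  -- V({i₁})
  have hcm1 : ∀ x : Fin d → Bool,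
      condMean (unif d) m {i₁} x = a * b2r (x i₁) + a / 2 - b / 2 * b2r (x i₁) := by
    intro x
    unfold condMean unif
    simp only [Finset.mem_singleton, forall_eq, hm]
    rw [sum_two' i₁ i₂ hi _
        (fun b1 b2 => if b1 = x i₁ then
          1/(2:ℝ)^d * (a * b2r b1 + a * b2r b2 - b * (b2r b1 * b2r b2)) else 0)
        (fun w => rfl),
      sum_two' i₁ i₂ hi _ (fun b1 _ => if b1 = x i₁ then 1/(2:ℝ)^d else 0)
        (fun w => rfl)]
    rw [hpow]
    cases hx : x i₁ <;> simp [b2r] <;> field_simp <;> ring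
  have hV1 : Vbar (unif d) m {i₁} = 5 / 4 * a ^ 2 - 3 / 4 * a * b + 1 / 8 * b ^ 2 := by
    unfold Vbar
    simp only [hcm1]
    rw [sum_two' i₁ i₂ hi
        (fun x => unif d x * (a * b2r (x i₁) + a / 2 - b / 2 * b2r (x i₁)) ^ 2)
        (fun b1 _ => 1/(2:ℝ)^d * (a * b2r b1 + a / 2 - b / 2 * b2r b1) ^ 2)
        (fun w => rfl)]
    rw [hpow]
    simp only [b2r, if_true, if_false, Bool.false_eq_true]
    field_simp
    ring
  -- V({i₂})
  have hcm2 : ∀ x : Fin d → Bool,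
      condMean (unif d) m {i₂} x = a * b2r (x i₂) + a / 2 - b / 2 * b2r (x i₂) := by
    intro x
    unfold condMean unif
    simp only [Finset.mem_singleton, forall_eq, hm]
    rw [sum_two' i₁ i₂ hi _
        (fun b1 b2 => if b2 = x i₂ then
          1/(2:ℝ)^d * (a * b2r b1 + a * b2r b2 - b * (b2r b1 * b2r b2)) else 0)
        (fun w => rfl),
      sum_two' i₁ i₂ hi _ (fun _ b2 => if b2 = x i₂ then 1/(2:ℝ)^d else 0)
        (fun w => rfl)]
    rw [hpow]
    cases hx : x i₂ <;> simp [b2r] <;> field_simp <;> ring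
  have hV2 : Vbar (unif d) m {i₂} = 5 / 4 * a ^ 2 - 3 / 4 * a * b + 1 / 8 * b ^ 2 := by
    unfold Vbar
    simp only [hcm2]
    rw [sum_two' i₁ i₂ hi
        (fun x => unif d x * (a * b2r (x i₂) + a / 2 - b / 2 * b2r (x i₂)) ^ 2)
        (fun _ b2 => 1/(2:ℝ)^d * (a * b2r b2 + a / 2 - b / 2 * b2r b2) ^ 2)
        (fun w => rfl)]
    rw [hpow]
    simp only [b2r, if_true, if_false, Bool.false_eq_true]
    field_simp
    ring
  -- V({i₁, i₂})
  have hcm12 : ∀ x : Fin d → Bool,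
      condMean (unif d) m {i₁, i₂} x
        = a * b2r (x i₁) + a * b2r (x i₂) - b * (b2r (x i₁) * b2r (x i₂)) := by
    intro x
    unfold condMean unif
    simp only [Finset.mem_insert, Finset.mem_singleton, forall_eq_or_imp, forall_eq, hm]
    rw [sum_two' i₁ i₂ hi _
        (fun b1 b2 => if b1 = x i₁ ∧ b2 = x i₂ then
          1/(2:ℝ)^d * (a * b2r b1 + a * b2r b2 - b * (b2r b1 * b2r b2)) else 0)
        (fun w => rfl),
      sum_two' i₁ i₂ hi _ (fun b1 b2 => if b1 = x i₁ ∧ b2 = x i₂ then 1/(2:ℝ)^d else 0)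
        (fun w => rfl)]
    rw [hpow]
    cases hx1 : x i₁ <;> cases hx2 : x i₂ <;> simp [b2r] <;> field_simp <;> ring
  have hV12 : Vbar (unif d) m {i₁, i₂} = 3 / 2 * a ^ 2 - a * b + 1 / 4 * b ^ 2 := by
    unfold Vbar
    simp only [hcm12]
    rw [sum_two' i₁ i₂ hi
        (fun x => unif d x *
          (a * b2r (x i₁) + a * b2r (x i₂) - b * (b2r (x i₁) * b2r (x i₂))) ^ 2)
        (fun b1 b2 => 1/(2:ℝ)^d *
          (a * b2r b1 + a * b2r b2 - b * (b2r b1 * b2r b2)) ^ 2)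
        (fun w => rfl)]
    rw [hpow]
    simp only [b2r, if_true, if_false, Bool.false_eq_true]
    field_simp
    ring
  refine ⟨hV0, hV1, hV2, hV12, fun hb => ?_⟩
  rw [hV0, hV1, hV2, hV12]
  have hba : b - 2 * a ≠ 0 := sub_ne_zero.mpr hb
  have hkey : 5 / 4 * a ^ 2 - 3 / 4 * a * b + 1 / 8 * b ^ 2 - (a - b / 4) ^ 2
      = (b - 2 * a) ^ 2 / 16 := by ring
  rw [hkey]
  field_simp
  ring
end
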